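/- Every matrix in the principal congruence subgroup Γ(2g,4) (symplectic matrices congruent to the identity modulo 4) lies in 𝔎, and every matrix of 𝔎 is congruent to the identity modulo 2; that is, Γ(2g,4) ≤ 𝔎 ≤ Γ(2g,2). -/

import Mathlib

open Matrix

/-- The standard symplectic form matrix `J = [[0, I], [-I, 0]]`. -/
def Jmat (g : ℕ) (R : Type*) [CommRing R] :
    Matrix (Fin g ⊕ Fin g) (Fin g ⊕ Fin g) R :=
  Matrix.fromBlocks 0 1 (-1) 0

/-- The set of integral symplectic matrices, `Sp(2g, ℤ)`. -/
def SpSet (g : ℕ) : Set (Matrix (Fin g ⊕ Fin g) (Fin g ⊕ Fin g) ℤ) :=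
  {X | Xᵀ * Jmat g ℤ * X = Jmat g ℤ}

/-- The subset `𝔎` of `Sp(2g, ℤ)`: symplectic matrices of the form
`[[I+2a, 2b], [2c, I+2d]]` with `Diag b` and `Diag c` even and `Tr a` even. -/
def KSet (g : ℕ) : Set (Matrix (Fin g ⊕ Fin g) (Fin g ⊕ Fin g) ℤ) :=
  {X | X ∈ SpSet g ∧ ∃ a b c d : Matrix (Fin g) (Fin g) ℤ,
    X = Matrix.fromBlocks (1 + 2 • a) (2 • b) (2 • c) (1 + 2 • d) ∧
    (∀ i, (2:ℤ) ∣ b i i) ∧ (∀ i, (2:ℤ) ∣ c i i) ∧ (2:ℤ) ∣ Matrix.trace a}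

/-- The principal congruence subgroup `Γ(2g, N)`: symplectic integral matrices
congruent to the identity modulo `N`. -/
def GammaSet (g : ℕ) (N : ℤ) : Set (Matrix (Fin g ⊕ Fin g) (Fin g ⊕ Fin g) ℤ) :=
  {X | X ∈ SpSet g ∧ ∀ i j, N ∣ (X i j - (1 : Matrix (Fin g ⊕ Fin g) (Fin g ⊕ Fin g) ℤ) i j)}

/-- `Γ(2g,4) ≤ 𝔎 ≤ Γ(2g,2)`. -/
theorem stmt5 (g : ℕ) (hg : 1 ≤ g) :
    GammaSet g 4 ⊆ KSet g ∧ KSet g ⊆ GammaSet g 2 := by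
  constructor
  · rintro X ⟨hX, hmod⟩
    have h24 : (2:ℤ) ∣ 4 := by norm_num
    refine ⟨hX,
      fun i j => (X (Sum.inl i) (Sum.inl j) - if i = j then 1 else 0) / 2,
      fun i j => X (Sum.inl i) (Sum.inr j) / 2,
      fun i j => X (Sum.inr i) (Sum.inl j) / 2,
      fun i j => (X (Sum.inr i) (Sum.inr j) - if i = j then 1 else 0) / 2,
      ?_, ?_, ?_, ?_⟩
    · ext x y
      rcases x with i | i <;> rcases y with j | j <;>
        simp only [Matrix.fromBlocks_apply₁₁, Matrix.fromBlocks_apply₁₂,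
          Matrix.fromBlocks_apply₂₁, Matrix.fromBlocks_apply₂₂, Matrix.add_apply,
          Matrix.smul_apply, Pi.smul_apply, Matrix.one_apply] <;>
        erw [Matrix.smul_apply, nsmul_eq_mul] <;> push_cast
      · have h := hmod (Sum.inl i) (Sum.inl j)
        simp only [Matrix.one_apply, Sum.inl.injEq] at h
        rw [Int.mul_ediv_cancel' (h24.trans h)]; ring
      · have h := hmod (Sum.inl i) (Sum.inr j)
        simp only [Matrix.one_apply, reduceCtorEq, if_false, sub_zero] at h
        exact (Int.mul_ediv_cancel' (h24.trans h)).symm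
      · have h := hmod (Sum.inr i) (Sum.inl j)
        simp only [Matrix.one_apply, reduceCtorEq, if_false, sub_zero] at h
        exact (Int.mul_ediv_cancel' (h24.trans h)).symm
      · have h := hmod (Sum.inr i) (Sum.inr j)
        simp only [Matrix.one_apply, Sum.inr.injEq] at h
        rw [Int.mul_ediv_cancel' (h24.trans h)]; ring
    · intro i
      have h := hmod (Sum.inl i) (Sum.inr i)
      simp only [Matrix.one_apply, reduceCtorEq, if_false, sub_zero] at h
      simpa using Int.ediv_dvd_ediv h24 h
    · intro i
      have h := hmod (Sum.inr i) (Sum.inl i)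
      simp only [Matrix.one_apply, reduceCtorEq, if_false, sub_zero] at h
      simpa using Int.ediv_dvd_ediv h24 h
    · refine Finset.dvd_sum fun i _ => ?_
      have h := hmod (Sum.inl i) (Sum.inl i)
      simp only [Matrix.one_apply, if_pos rfl] at h
      simpa [Matrix.diag] using Int.ediv_dvd_ediv h24 h
  · rintro X ⟨hX, a, b, c, d, rfl, hb, hc, ha⟩
    refine ⟨hX, ?_⟩
    rintro (i | i) (j | j) <;>
      simp only [Matrix.fromBlocks_apply₁₁, Matrix.fromBlocks_apply₁₂,
        Matrix.fromBlocks_apply₂₁, Matrix.fromBlocks_apply₂₂, Matrix.add_apply,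
        Matrix.smul_apply, Matrix.one_apply, reduceCtorEq, if_false, sub_zero, Sum.inl.injEq, Sum.inr.injEq]
    · exact ⟨a i j, by rw [nsmul_eq_mul]; push_cast; split <;> ring⟩
    · exact ⟨b i j, by rw [nsmul_eq_mul]; push_cast; ring⟩
    · exact ⟨c i j, by rw [nsmul_eq_mul]; push_cast; ring⟩
    · exact ⟨d i j, by rw [nsmul_eq_mul]; push_cast; split <;> ring⟩
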